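/- arXiv:2603.29096 — 3 statements merged into one kernel-verified Lean document; each statement's English description precedes it below -/
import Mathlib

section
/- Let K : ℝ^m → [0,∞) be measurable with 0 < Z = ∫ K < ∞. The one-step Sliced Gibbs transition kernel T((u,x) → (ũ, x̃)) = [1{K(x) > ũ}/K(x)] · ∏_{j=1}^m [1{K(x̃₁,…,x̃_j, x_{j+1},…,x_m) > ũ}/A_j(x̃₁,…,x̃_{j-1}, x_{j+1},…,x_m, ũ)] leaves the density H(u,x) = 1{K(x) > u}/Z invariant: ∫ T((u,x)→(ũ,x̃)) H(u,x) du dx = H(ũ, x̃), provided all slice widths A_j are positive and finite along the chain. -/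
open MeasureTheory Set
open scoped ENNReal

/-- The vector `(x̃₁,…,x̃_{j-1}, x_j,…,x_m)`: coordinates strictly below `j` come from `x̃`,
the rest from `x`. -/
noncomputable def hybLt {m : ℕ} (xt x : Fin m → ℝ) (j : Fin m) : Fin m → ℝ :=
  fun i => if (i : ℕ) < (j : ℕ) then xt i else x i

/-- The vector `(x̃₁,…,x̃_j, x_{j+1},…,x_m)`: coordinates up to and including `j` from `x̃`,
the rest from `x`. -/
noncomputable def hybLe {m : ℕ} (xt x : Fin m → ℝ) (j : Fin m) : Fin m → ℝ :=
  fun i => if (i : ℕ) ≤ (j : ℕ) then xt i else x i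

/-- Slice width `A_j(x̃₁,…,x̃_{j-1}, x_{j+1},…,x_m; u)`: Lebesgue measure of the `j`-th
conditional level set. -/
noncomputable def Aslice {m : ℕ} (K : (Fin m → ℝ) → ℝ) (xt x : Fin m → ℝ) (j : Fin m)
    (u : ℝ) : ℝ :=
  ∫ z : ℝ, (if u < K (Function.update (hybLt xt x j) j z) then (1 : ℝ) else 0)

/-- vector with first `k` coords from `xt`, rest from `x` (ℕ-indexed version). -/
noncomputable def hybN {m : ℕ} (xt x : Fin m → ℝ) (k : ℕ) : Fin m → ℝ :=
  fun i => if (i : ℕ) < k then xt i else x i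

lemma hybN_zero {m : ℕ} (xt x : Fin m → ℝ) : hybN xt x 0 = x := by
  funext i; simp [hybN]

lemma hybN_top {m : ℕ} (xt x : Fin m → ℝ) : hybN xt x m = xt := by
  funext i; simp [hybN, i.isLt]

lemma hybLt_eq {m : ℕ} (xt x : Fin m → ℝ) (j : Fin m) : hybLt xt x j = hybN xt x j := rfl

lemma hybLe_eq {m : ℕ} (xt x : Fin m → ℝ) (j : Fin m) :
    hybLe xt x j = hybN xt x ((j : ℕ) + 1) := by
  funext i; simp [hybLe, hybN, Nat.lt_succ_iff]

lemma measurable_hybN {m : ℕ} (xt : Fin m → ℝ) (k : ℕ) :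
    Measurable (fun x : Fin m → ℝ => hybN xt x k) := by
  apply measurable_pi_lambda
  intro i
  by_cases h : (i : ℕ) < k
  · simpa [hybN, h] using measurable_const
  · simpa [hybN, h] using measurable_pi_apply i

lemma measurable_upd {m : ℕ} (xt : Fin m → ℝ) (j : Fin m) :
    Measurable (fun p : (Fin m → ℝ) × ℝ =>
      Function.update (hybLt xt p.1 j) j p.2) := by
  apply measurable_pi_lambda
  intro i
  by_cases hij : i = j
  · subst hij; simpa using measurable_snd
  · simp only [Function.update_of_ne hij, hybLt]
    by_cases h : (i : ℕ) < (j : ℕ)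
    · simpa [h] using measurable_const
    · simp only [h, if_false]
      exact (measurable_pi_apply i).comp measurable_fst

lemma measurable_aslice {m : ℕ} {K : (Fin m → ℝ) → ℝ} (hK : Measurable K)
    (xt : Fin m → ℝ) (j : Fin m) (u : ℝ) :
    Measurable (fun x : Fin m → ℝ => Aslice K xt x j u) := by
  have h : StronglyMeasurable (fun p : (Fin m → ℝ) × ℝ =>
      (if u < K (Function.update (hybLt xt p.1 j) j p.2) then (1 : ℝ) else 0)) := by
    refine Measurable.stronglyMeasurable ?_
    exact Measurable.ite (measurableSet_lt measurable_const
      (hK.comp (measurable_upd xt j))) measurable_const measurable_const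
  exact h.integral_prod_right'.measurable

noncomputable def Ifun {m : ℕ} (K : (Fin m → ℝ) → ℝ) (ut : ℝ) (y : Fin m → ℝ) : ℝ≥0∞ :=
  ENNReal.ofReal (if ut < K y then (1 : ℝ) else 0)

noncomputable def hfun {m : ℕ} (K : (Fin m → ℝ) → ℝ) (xt : Fin m → ℝ) (ut : ℝ)
    (j : Fin m) (x : Fin m → ℝ) : ℝ≥0∞ :=
  Ifun K ut (hybN xt x ((j : ℕ) + 1)) / ENNReal.ofReal (Aslice K xt x j ut)

noncomputable def Gfun {m : ℕ} (K : (Fin m → ℝ) → ℝ) (xt : Fin m → ℝ) (ut : ℝ)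
    (x : Fin m → ℝ) : ℝ≥0∞ :=
  Ifun K ut x * ∏ j : Fin m, hfun K xt ut j x

lemma measurable_Ifun_comp {m : ℕ} {K : (Fin m → ℝ) → ℝ} (hK : Measurable K) (ut : ℝ)
    {α : Type*} [MeasurableSpace α] {v : α → Fin m → ℝ} (hv : Measurable v) :
    Measurable (fun a => Ifun K ut (v a)) := by
  unfold Ifun
  exact ENNReal.measurable_ofReal.comp
    (Measurable.ite (measurableSet_lt measurable_const (hK.comp hv))
      measurable_const measurable_const)

lemma measurable_Gfun {m : ℕ} {K : (Fin m → ℝ) → ℝ} (hK : Measurable K)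
    (xt : Fin m → ℝ) (ut : ℝ) : Measurable (Gfun K xt ut) := by
  apply Measurable.mul
  · exact measurable_Ifun_comp hK ut measurable_id
  · apply Finset.measurable_prod
    intro j _
    exact Measurable.div (measurable_Ifun_comp hK ut (measurable_hybN xt _))
      (ENNReal.measurable_ofReal.comp (measurable_aslice hK xt j ut))

lemma sg_lintegral {m : ℕ} {K : (Fin m → ℝ) → ℝ} (hK : Measurable K)
    (xt : Fin m → ℝ) (ut : ℝ) (hut : 0 < ut)
    (hA_int : ∀ (x : Fin m → ℝ) (j : Fin m),
      Integrable (fun z : ℝ =>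
        (if ut < K (Function.update (hybLt xt x j) j z) then (1 : ℝ) else 0)))
    (hA_pos : ∀ (x : Fin m → ℝ) (j : Fin m), 0 < Aslice K xt x j ut) :
    ∫⁻ x : Fin m → ℝ, Gfun K xt ut x = Ifun K ut xt := by
  classical
  set μ : Fin m → Measure ℝ := fun _ => volume with hμ
  set S : ℕ → Finset (Fin m) := fun k => Finset.univ.filter fun i => (i : ℕ) < k with hS
  set T : ℕ → Finset (Fin m) := fun k => Finset.univ.filter fun i => k ≤ (i : ℕ) with hT
  have hGmeas : Measurable (Gfun K xt ut) := measurable_Gfun hK xt ut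
  have claim : ∀ k, k ≤ m →
      (∫⋯∫⁻_(S k), Gfun K xt ut ∂μ) =
        fun x => Ifun K ut (hybN xt x k) * ∏ j ∈ T k, hfun K xt ut j x := by
    intro k
    induction k with
    | zero =>
      intro _
      have h0 : S 0 = ∅ := by ext i; simp [hS]
      have h1 : T 0 = Finset.univ := by ext i; simp [hT]
      rw [h0, lmarginal_empty, h1]
      funext x
      rw [hybN_zero]
      rfl
    | succ k ih =>
      intro hk1
      have hk : k < m := hk1
      set fk : Fin m := ⟨k, hk⟩ with hfk
      have hSins : S (k + 1) = insert fk (S k) := by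
        ext i; simp [hS, hfk, Fin.ext_iff]; omega
      have hfkS : fk ∉ S k := by simp [hS, hfk]
      have hTins : T k = insert fk (T (k + 1)) := by
        ext i; simp [hT, hfk, Fin.ext_iff]; omega
      have hfkT : fk ∉ T (k + 1) := by simp [hT, hfk]
      rw [hSins]
      funext x
      rw [lmarginal_insert _ hGmeas hfkS, ih (le_of_lt hk)]
      have hv : ∀ t, hybN xt (Function.update x fk t) k
          = Function.update (hybN xt x k) fk t := by
        intro t
        funext i
        rcases eq_or_ne i fk with rfl | hne
        · simp [hybN, hfk, Function.update_self]
        · simp [hybN, Function.update_of_ne hne]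
      have hh : ∀ t, ∀ j ∈ T k, hfun K xt ut j (Function.update x fk t)
          = hfun K xt ut j x := by
        intro t j hj
        have hkj : k ≤ (j : ℕ) := by simpa [hT] using hj
        have h1 : hybN xt (Function.update x fk t) ((j : ℕ) + 1) = hybN xt x ((j : ℕ) + 1) := by
          funext i
          by_cases h : (i : ℕ) < (j : ℕ) + 1
          · simp [hybN, h]
          · have hne : i ≠ fk := by
              intro hE; subst hE; simp [hfk] at h; omega
            simp [hybN, h, Function.update_of_ne hne]
        have harg : ∀ z : ℝ, Function.update (hybLt xt (Function.update x fk t) j) j z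
            = Function.update (hybLt xt x j) j z := by
          intro z
          funext i
          rcases eq_or_ne i j with rfl | hij
          · simp
          · simp only [Function.update_of_ne hij, hybLt]
            by_cases h : (i : ℕ) < (j : ℕ)
            · simp [h]
            · have hne : i ≠ fk := by
                intro hE
                apply h
                have : (i : ℕ) = k := by rw [hE]
                have hjk : (j : ℕ) ≠ k := fun hE2 => hij (by
                  apply Fin.ext; rw [hE, hE2])
                omega
              simp [h, Function.update_of_ne hne]
        have h2 : Aslice K xt (Function.update x fk t) j ut = Aslice K xt x j ut := by
          unfold Aslice
          congr 1
          funext z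
          rw [harg z]
        unfold hfun
        rw [h1, h2]
      have hstep : (∫⁻ t, Ifun K ut (hybN xt (Function.update x fk t) k) *
            ∏ j ∈ T k, hfun K xt ut j (Function.update x fk t) ∂(μ fk))
          = ENNReal.ofReal (Aslice K xt x fk ut) * ∏ j ∈ T k, hfun K xt ut j x := by
        have : ∀ t, Ifun K ut (hybN xt (Function.update x fk t) k) *
              ∏ j ∈ T k, hfun K xt ut j (Function.update x fk t)
            = Ifun K ut (Function.update (hybN xt x k) fk t) * ∏ j ∈ T k, hfun K xt ut j x := by
          intro t
          rw [hv t, Finset.prod_congr rfl (hh t)]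
        simp_rw [this]
        rw [lintegral_mul_const _ (measurable_Ifun_comp hK ut (measurable_update _))]
        congr 1
        have hint := hA_int x fk
        have hnn : 0 ≤ᵐ[volume] fun z : ℝ =>
            (if ut < K (Function.update (hybLt xt x fk) fk z) then (1 : ℝ) else 0) :=
          Filter.Eventually.of_forall fun z => by
            simp only [Pi.zero_apply]; split_ifs <;> norm_num
        have := ofReal_integral_eq_lintegral_ofReal hint hnn
        rw [show Aslice K xt x fk ut
            = ∫ z : ℝ, (if ut < K (Function.update (hybLt xt x fk) fk z) then (1 : ℝ) else 0)
          from rfl, this]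
        rfl
      rw [hstep, hTins, Finset.prod_insert hfkT, ← mul_assoc]
      have h0 : ENNReal.ofReal (Aslice K xt x fk ut) ≠ 0 :=
        (ENNReal.ofReal_pos.mpr (hA_pos x fk)).ne'
      rw [show hfun K xt ut fk x
          = Ifun K ut (hybN xt x (k + 1)) / ENNReal.ofReal (Aslice K xt x fk ut) from rfl]
      rw [ENNReal.mul_div_cancel h0 ENNReal.ofReal_ne_top]
  have hSm : S m = Finset.univ := by
    ext i; simp [hS, i.isLt]
  have hTm : T m = ∅ := by
    ext i; simp [hT, Nat.not_le.mpr i.isLt]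
  rw [show (volume : Measure (Fin m → ℝ)) = Measure.pi μ from volume_pi,
    lintegral_eq_lmarginal_univ xt, ← hSm, claim m le_rfl]
  dsimp only
  rw [hybN_top, hTm]
  simp


/-- One-step Sliced Gibbs transition kernel density
`T((u,x) → (ũ,x̃))` (it does not depend on the previous height `u`). -/
noncomputable def sgKernel {m : ℕ} (K : (Fin m → ℝ) → ℝ) (x : Fin m → ℝ) (ut : ℝ)
    (xt : Fin m → ℝ) : ℝ :=
  ((if ut < K x then (1 : ℝ) else 0) / K x) *
    ∏ j : Fin m, (if ut < K (hybLe xt x j) then (1 : ℝ) else 0) / Aslice K xt x j ut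

/-- Stationarity of the Sliced Gibbs sampler: the transition kernel leaves the joint
density `H(u,x) = 1{K(x) > u}/Z` invariant, provided all slice widths are positive and
finite. -/
theorem sliced_gibbs_invariance
    (m : ℕ) (K : (Fin m → ℝ) → ℝ)
    (hK_meas : Measurable K)
    (hK_nonneg : ∀ x, 0 ≤ K x)
    (hK_int : Integrable K)
    (Z : ℝ) (hZ : Z = ∫ x, K x) (hZ_pos : 0 < Z)
    (hA_int : ∀ (xt x : Fin m → ℝ) (j : Fin m) (u : ℝ), 0 < u →
      Integrable (fun z : ℝ =>
        (if u < K (Function.update (hybLt xt x j) j z) then (1 : ℝ) else 0)))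
    (hA_pos : ∀ (xt x : Fin m → ℝ) (j : Fin m) (u : ℝ), 0 < u →
      0 < Aslice K xt x j u) :
    ∀ (ut : ℝ) (xt : Fin m → ℝ), 0 < ut →
      (∫ x : Fin m → ℝ, ∫ u in Set.Ioi (0 : ℝ),
          sgKernel K x ut xt * ((if K x > u then (1 : ℝ) else 0) / Z))
        = (if K xt > ut then (1 : ℝ) else 0) / Z := by
  intro ut xt hut
  set g : (Fin m → ℝ) → ℝ := fun x => (if ut < K x then (1 : ℝ) else 0) *
      ∏ j : Fin m, ((if ut < K (hybLe xt x j) then (1 : ℝ) else 0) / Aslice K xt x j ut)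
    with hg
  have h1 : ∀ x : Fin m → ℝ,
      (∫ u in Set.Ioi (0 : ℝ), sgKernel K x ut xt * ((if K x > u then (1 : ℝ) else 0) / Z))
        = g x / Z := by
    intro x
    rw [integral_const_mul, integral_div]
    have h2 : (∫ u in Set.Ioi (0 : ℝ), (if K x > u then (1 : ℝ) else 0)) = K x := by
      have hfe : (fun u : ℝ => if K x > u then (1 : ℝ) else 0)
          = (Set.Iio (K x)).indicator (fun _ => (1 : ℝ)) := by
        funext u; by_cases h : u < K x <;> simp [Set.indicator, h]
      rw [hfe, setIntegral_indicator measurableSet_Iio, setIntegral_const,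
        Set.Ioi_inter_Iio, measureReal_def, Real.volume_Ioo]
      rw [ENNReal.toReal_ofReal (by linarith [hK_nonneg x])]
      simp
    rw [h2]
    by_cases hx : ut < K x
    · have hKx : K x ≠ 0 := ne_of_gt (lt_trans hut hx)
      have hZ0 : Z ≠ 0 := ne_of_gt hZ_pos
      simp only [sgKernel, hg, if_pos hx]
      field_simp
    · simp [sgKernel, hg, hx]
  have hgnn : ∀ x, 0 ≤ g x := by
    intro x
    apply mul_nonneg
    · split_ifs <;> norm_num
    · apply Finset.prod_nonneg
      intro j _
      exact div_nonneg (by split_ifs <;> norm_num) (le_of_lt (hA_pos xt x j ut hut))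
  have hgmeas : Measurable g := by
    apply Measurable.mul
    · exact Measurable.ite (measurableSet_lt measurable_const hK_meas)
        measurable_const measurable_const
    · apply Finset.measurable_prod
      intro j _
      apply Measurable.div
      · simp only [hybLe_eq]
        exact Measurable.ite (measurableSet_lt measurable_const
          (hK_meas.comp (measurable_hybN xt _))) measurable_const measurable_const
      · exact measurable_aslice hK_meas xt j ut
  have key : (∫ x : Fin m → ℝ, g x) = (if ut < K xt then (1 : ℝ) else 0) := by
    rw [integral_eq_lintegral_of_nonneg_ae (Filter.Eventually.of_forall hgnn)
      hgmeas.aestronglyMeasurable]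
    have hof : ∀ x, ENNReal.ofReal (g x) = Gfun K xt ut x := by
      intro x
      rw [hg]
      dsimp only
      rw [ENNReal.ofReal_mul (by split_ifs <;> norm_num)]
      rw [ENNReal.ofReal_prod_of_nonneg (fun j _ =>
        div_nonneg (by split_ifs <;> norm_num) (le_of_lt (hA_pos xt x j ut hut)))]
      unfold Gfun hfun Ifun
      congr 1
      apply Finset.prod_congr rfl
      intro j _
      rw [ENNReal.ofReal_div_of_pos (hA_pos xt x j ut hut), hybLe_eq]
    simp_rw [hof]
    rw [sg_lintegral hK_meas xt ut hut (fun x j => hA_int xt x j ut hut)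
      (fun x j => hA_pos xt x j ut hut)]
    unfold Ifun
    rw [ENNReal.toReal_ofReal (by split_ifs <;> norm_num)]
  calc (∫ x : Fin m → ℝ, ∫ u in Set.Ioi (0 : ℝ),
          sgKernel K x ut xt * ((if K x > u then (1 : ℝ) else 0) / Z))
      = ∫ x : Fin m → ℝ, g x / Z := by simp_rw [h1]
    _ = (∫ x : Fin m → ℝ, g x) / Z := integral_div Z g
    _ = (if K xt > ut then (1 : ℝ) else 0) / Z := by rw [key]
end

section
/- A Markov transition kernel T on a measurable space satisfying the Doeblin condition T(x, A) ≥ ε ν(A) for all x and measurable A, with ε ∈ (0,1] and ν a probability measure, is uniformly ergodic: for every x, the total variation distance between the n-step kernel T^n(x, ·) and the invariant distribution π satisfies ‖T^n(x,·) − π‖_TV ≤ (1 − ε)^n. -/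
open MeasureTheory ProbabilityTheory Set
open scoped ENNReal

lemma lintegral_le_lintegral_add_of_setBound {X : Type*} [MeasurableSpace X]
    (μ π : Measure X) (g : X → ℝ≥0∞) (hg : Measurable g)
    (c : ℝ) (hc : 0 ≤ c) (hgc : ∀ x, g x ≤ ENNReal.ofReal c)
    (D : ℝ≥0∞) (hD : ∀ B : Set X, MeasurableSet B → μ B ≤ π B + D) :
    ∫⁻ x, g x ∂μ ≤ ∫⁻ x, g x ∂π + ENNReal.ofReal c * D := by
  set f : X → ℝ := fun x => (g x).toReal with hf
  have hfm : Measurable f := hg.ennreal_toReal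
  have hfnn : ∀ x, 0 ≤ f x := fun x => ENNReal.toReal_nonneg
  have hfc : ∀ x, f x ≤ c := by
    intro x
    have := hgc x
    calc f x ≤ (ENNReal.ofReal c).toReal := ENNReal.toReal_mono ENNReal.ofReal_ne_top this
    _ = c := ENNReal.toReal_ofReal hc
  have hgf : ∀ x, g x = ENNReal.ofReal (f x) := by
    intro x
    rw [ENNReal.ofReal_toReal]
    exact ne_top_of_le_ne_top ENNReal.ofReal_ne_top (hgc x)
  have hmS : ∀ t : ℝ, MeasurableSet {a | t < f a} :=
    fun t => measurableSet_lt measurable_const hfm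
  have lcμ : ∫⁻ x, g x ∂μ = ∫⁻ t in Ioi (0:ℝ), μ {a | t < f a} := by
    simp_rw [hgf]
    exact lintegral_eq_lintegral_meas_lt μ (Filter.Eventually.of_forall hfnn) hfm.aemeasurable
  have lcπ : ∫⁻ x, g x ∂π = ∫⁻ t in Ioi (0:ℝ), π {a | t < f a} := by
    simp_rw [hgf]
    exact lintegral_eq_lintegral_meas_lt π (Filter.Eventually.of_forall hfnn) hfm.aemeasurable
  have hanti : Antitone (fun t : ℝ => π {a | t < f a}) := by
    intro s t hst
    exact measure_mono (fun a ha => lt_of_le_of_lt hst ha)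
  have hbound : ∀ t ∈ Ioi (0:ℝ), μ {a | t < f a} ≤
      (fun t => π {a | t < f a} + (Ioc (0:ℝ) c).indicator (fun _ => D) t) t := by
    intro t ht
    simp only
    by_cases htc : t ≤ c
    · rw [Set.indicator_of_mem (Set.mem_Ioc.mpr ⟨ht, htc⟩)]
      exact hD _ (hmS t)
    · have hemp : {a | t < f a} = ∅ := by
        ext a; simp only [mem_setOf_eq, mem_empty_iff_false, iff_false, not_lt]
        exact (hfc a).trans (le_of_not_ge htc)
      rw [hemp]
      simp
  calc ∫⁻ x, g x ∂μ = ∫⁻ t in Ioi (0:ℝ), μ {a | t < f a} := lcμ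
    _ ≤ ∫⁻ t in Ioi (0:ℝ), (π {a | t < f a} + (Ioc (0:ℝ) c).indicator (fun _ => D) t) := by
        apply setLIntegral_mono (Measurable.add hanti.measurable
          (measurable_const.indicator measurableSet_Ioc)) hbound
    _ = (∫⁻ t in Ioi (0:ℝ), π {a | t < f a}) +
        ∫⁻ t in Ioi (0:ℝ), (Ioc (0:ℝ) c).indicator (fun _ => D) t := by
        rw [lintegral_add_left hanti.measurable]
    _ ≤ ∫⁻ x, g x ∂π + ENNReal.ofReal c * D := by
        rw [lcπ]
        gcongr
        rw [lintegral_indicator measurableSet_Ioc, setLIntegral_const,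
          Measure.restrict_apply measurableSet_Ioc,
          Set.inter_eq_left.mpr Set.Ioc_subset_Ioi_self, Real.volume_Ioc]
        rw [mul_comm]
        gcongr
        simp [hc]

lemma doeblin_step {X : Type*} [MeasurableSpace X]
    (T : Kernel X X) [IsMarkovKernel T]
    (ν : Measure X) [IsProbabilityMeasure ν]
    (ε : ℝ) (hε0 : 0 < ε) (hε1 : ε ≤ 1)
    (hDoeblin : ∀ (x : X) (A : Set X), MeasurableSet A →
      ENNReal.ofReal ε * ν A ≤ T x A)
    (μ π' : Measure X) [IsProbabilityMeasure μ] [IsProbabilityMeasure π']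
    (D : ℝ≥0∞) (hD : ∀ B : Set X, MeasurableSet B → μ B ≤ π' B + D)
    (A : Set X) (hA : MeasurableSet A) :
    (μ.bind T) A ≤ (π'.bind T) A + ENNReal.ofReal (1 - ε) * D := by
  set c0 : ℝ≥0∞ := ENNReal.ofReal ε * ν A with hc0
  have hc0top : c0 ≠ ∞ :=
    ENNReal.mul_ne_top ENNReal.ofReal_ne_top (measure_ne_top _ _)
  set g : X → ℝ≥0∞ := fun x => T x A with hgdef
  have hgm : Measurable g := Kernel.measurable_coe T hA
  have hge : ∀ x, c0 ≤ g x := fun x => hDoeblin x A hA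
  -- upper bound on g - c0
  have hub : ∀ x, g x - c0 ≤ ENNReal.ofReal (1 - ε) := by
    intro x
    have hsplit : g x + T x Aᶜ = 1 := by
      rw [hgdef]
      simp only
      rw [measure_add_measure_compl hA]
      simp
    have hb : ENNReal.ofReal ε * ν Aᶜ ≤ T x Aᶜ := hDoeblin x Aᶜ hA.compl
    have h1 : g x ≤ 1 - ENNReal.ofReal ε * ν Aᶜ := by
      apply ENNReal.le_sub_of_add_le_right (ENNReal.mul_ne_top ENNReal.ofReal_ne_top (measure_ne_top _ _))
      calc g x + ENNReal.ofReal ε * ν Aᶜ ≤ g x + T x Aᶜ := by gcongr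
        _ = 1 := hsplit
    calc g x - c0 ≤ (1 - ENNReal.ofReal ε * ν Aᶜ) - c0 := tsub_le_tsub_right h1 c0
      _ = 1 - (ENNReal.ofReal ε * ν Aᶜ + c0) := by rw [tsub_tsub]
      _ = 1 - ENNReal.ofReal ε := by
          rw [hc0, ← mul_add, measure_compl hA (measure_ne_top _ _), measure_univ,
            tsub_add_cancel_of_le prob_le_one, mul_one]
      _ = ENNReal.ofReal (1 - ε) := by
          rw [ENNReal.ofReal_sub 1 (le_of_lt hε0), ENNReal.ofReal_one]
  have key := lintegral_le_lintegral_add_of_setBound μ π' (fun x => g x - c0)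
    (hgm.sub measurable_const) (1 - ε) (by linarith) hub D hD
  have hint : ∀ (ρ : Measure X) [IsProbabilityMeasure ρ],
      ∫⁻ x, (g x - c0) ∂ρ = (∫⁻ x, g x ∂ρ) - c0 := by
    intro ρ _
    rw [lintegral_sub measurable_const (by rw [lintegral_const, measure_univ, mul_one]; exact hc0top)
      (Filter.Eventually.of_forall hge)]
    rw [lintegral_const, measure_univ, mul_one]
  have hbind : ∀ (ρ : Measure X), ρ.bind T A = ∫⁻ x, g x ∂ρ := by
    intro ρ
    exact Measure.bind_apply hA (Kernel.measurable T).aemeasurable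
  have hc0le : ∀ (ρ : Measure X) [IsProbabilityMeasure ρ], c0 ≤ ∫⁻ x, g x ∂ρ := by
    intro ρ _
    calc c0 = ∫⁻ _, c0 ∂ρ := by simp
      _ ≤ ∫⁻ x, g x ∂ρ := lintegral_mono hge
  rw [hint μ, hint π'] at key
  rw [hbind μ, hbind π']
  have hμle := hc0le μ
  have hπle := hc0le π'
  calc ∫⁻ x, g x ∂μ = (∫⁻ x, g x ∂μ - c0) + c0 := (tsub_add_cancel_of_le hμle).symm
    _ ≤ ((∫⁻ x, g x ∂π' - c0) + ENNReal.ofReal (1 - ε) * D) + c0 := by gcongr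
    _ = ((∫⁻ x, g x ∂π' - c0) + c0) + ENNReal.ofReal (1 - ε) * D := by ring
    _ = ∫⁻ x, g x ∂π' + ENNReal.ofReal (1 - ε) * D := by
        rw [tsub_add_cancel_of_le hπle]

/-- Total variation distance between two measures: `sup_A |μ(A) − ν(A)|` over
measurable sets `A`. -/
noncomputable def tvDist {X : Type*} [MeasurableSpace X] (μ ν : Measure X) : ℝ :=
  ⨆ A : {A : Set X // MeasurableSet A}, |(μ A.1).toReal - (ν A.1).toReal|

/-- `n`-step iterate of a Markov kernel. -/
noncomputable def iterKernel {X : Type*} [MeasurableSpace X] (T : Kernel X X) :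
    ℕ → Kernel X X
  | 0 => Kernel.id
  | n + 1 => T ∘ₖ iterKernel T n

instance iterKernel_isMarkov {X : Type*} [MeasurableSpace X] (T : Kernel X X)
    [IsMarkovKernel T] : ∀ n, IsMarkovKernel (iterKernel T n)
  | 0 => by rw [iterKernel]; infer_instance
  | n + 1 => by
      rw [iterKernel]
      have := iterKernel_isMarkov T n
      infer_instance

/-- A Markov kernel satisfying the Doeblin condition `T(x, A) ≥ ε ν(A)` with
`ε ∈ (0,1]` and `ν` a probability measure is uniformly ergodic:
`‖T^n(x,·) − π‖_TV ≤ (1 − ε)^n` for every `x` and `n`, where `π` is the invariant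
distribution. -/
theorem doeblin_implies_uniform_ergodicity
    {X : Type*} [MeasurableSpace X]
    (T : Kernel X X) [IsMarkovKernel T]
    (π ν : Measure X) [IsProbabilityMeasure π] [IsProbabilityMeasure ν]
    (hπ_inv : π.bind T = π)
    (ε : ℝ) (hε0 : 0 < ε) (hε1 : ε ≤ 1)
    (hDoeblin : ∀ (x : X) (A : Set X), MeasurableSet A →
      ENNReal.ofReal ε * ν A ≤ T x A) :
    ∀ (x : X) (n : ℕ), tvDist ((iterKernel T n) x) π ≤ (1 - ε) ^ n := by
  have h1ε : (0:ℝ) ≤ 1 - ε := by linarith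
  have key : ∀ (n : ℕ) (x : X) (B : Set X), MeasurableSet B →
      (iterKernel T n x) B ≤ π B + ENNReal.ofReal ((1 - ε) ^ n) ∧
      π B ≤ (iterKernel T n x) B + ENNReal.ofReal ((1 - ε) ^ n) := by
    intro n
    induction n with
    | zero =>
      intro x B hB
      simp only [pow_zero, ENNReal.ofReal_one]
      constructor
      · exact le_trans prob_le_one le_add_self
      · exact le_trans prob_le_one le_add_self
    | succ n ih =>
      intro x B hB
      have hinst := iterKernel_isMarkov T n
      have happ : iterKernel T (n + 1) x = ((iterKernel T n) x).bind T := by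
        rw [iterKernel, Kernel.comp_apply]
      have hDn : ENNReal.ofReal ((1 - ε) ^ (n + 1)) =
          ENNReal.ofReal (1 - ε) * ENNReal.ofReal ((1 - ε) ^ n) := by
        rw [← ENNReal.ofReal_mul h1ε, pow_succ, mul_comm]
      constructor
      · rw [happ, ← hπ_inv, hDn]
        have := doeblin_step T ν ε hε0 hε1 hDoeblin ((iterKernel T n) x) π
          (ENNReal.ofReal ((1 - ε) ^ n)) (fun B hB => (ih x B hB).1) B hB
        rw [mul_comm] at this ⊢
        exact this
      · rw [happ]
        conv_lhs => rw [← hπ_inv]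
        rw [hDn]
        have := doeblin_step T ν ε hε0 hε1 hDoeblin π ((iterKernel T n) x)
          (ENNReal.ofReal ((1 - ε) ^ n)) (fun B hB => (ih x B hB).2) B hB
        exact this
  intro x n
  have hinst := iterKernel_isMarkov T n
  have hpow : (0:ℝ) ≤ (1 - ε) ^ n := pow_nonneg h1ε n
  have hne : Nonempty {A : Set X // MeasurableSet A} := ⟨⟨∅, MeasurableSet.empty⟩⟩
  apply ciSup_le
  rintro ⟨A, hA⟩
  rw [abs_sub_le_iff]
  have hconv : ∀ (ρ σ : Measure X) [IsProbabilityMeasure ρ] [IsProbabilityMeasure σ],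
      ρ A ≤ σ A + ENNReal.ofReal ((1 - ε) ^ n) →
      (ρ A).toReal - (σ A).toReal ≤ (1 - ε) ^ n := by
    intro ρ σ _ _ h
    have hfin : σ A + ENNReal.ofReal ((1 - ε) ^ n) ≠ ∞ :=
      ENNReal.add_ne_top.mpr ⟨measure_ne_top _ _, ENNReal.ofReal_ne_top⟩
    have := ENNReal.toReal_mono hfin h
    rw [ENNReal.toReal_add (measure_ne_top _ _) ENNReal.ofReal_ne_top,
      ENNReal.toReal_ofReal hpow] at this
    linarith
  exact ⟨hconv _ _ (key n x A hA).1, hconv _ _ (key n x A hA).2⟩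
end

section
/- The LASSO kernel K(β) = exp(−[(1/(2N))∑_{i=1}^N (y_i − β₀ − z_iᵀβ)² + λ∑_j |β_j|]) on ℝ^{p+1} is integrable whenever λ > 0, i.e., ∫ K(β) dβ < ∞, regardless of whether the design matrix has full column rank. -/
open MeasureTheory Set

lemma laplace_integrable {lam : ℝ} (h : 0 < lam) :
    Integrable (fun x : ℝ => Real.exp (-(lam * |x|))) := by
  have int_Ioi : IntegrableOn (fun x : ℝ => Real.exp (-(lam * |x|))) (Ioi 0) := by
    refine (exp_neg_integrableOn_Ioi 0 h).congr_fun ?_ measurableSet_Ioi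
    intro x hx
    simp [abs_of_pos (mem_Ioi.mp hx), neg_mul]
  have int_Iic : IntegrableOn (fun x : ℝ => Real.exp (-(lam * |x|))) (Iic 0) := by
    rw [← Measure.map_neg_eq_self (volume : Measure ℝ)]
    have m : MeasurableEmbedding fun x : ℝ => -x := (Homeomorph.neg ℝ).measurableEmbedding
    rw [m.integrableOn_map_iff]
    simp_rw [Function.comp_def, abs_neg, neg_preimage, neg_Iic, neg_zero]
    exact (integrableOn_Ici_iff_integrableOn_Ioi).mpr int_Ioi
  rw [← integrableOn_univ, ← Iic_union_Ioi (a := (0:ℝ))]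
  exact int_Iic.union int_Ioi

lemma quad_lower_bound {N : ℕ} (hN : 1 ≤ N) (c : Fin N → ℝ) (b : ℝ) :
    (1/2 : ℝ) * (b - (∑ i, c i) / N) ^ 2 ≤
      (1 / (2 * (N : ℝ))) * ∑ i, (c i - b) ^ 2 := by
  have hN0 : (0:ℝ) < N := by exact_mod_cast hN
  have key : ((N:ℝ)) * ((b - (∑ i, c i) / N) ^ 2) ≤ ∑ i, (c i - b) ^ 2 := by
    have cs : (∑ i, (c i - b)) ^ 2 ≤ (Finset.univ.card : ℝ) * ∑ i, (c i - b) ^ 2 :=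
      sq_sum_le_card_mul_sum_sq
    have hsum : (∑ i, (c i - b)) = (∑ i, c i) - N * b := by
      rw [Finset.sum_sub_distrib]
      simp [Finset.card_univ]
    rw [hsum, Finset.card_univ, Fintype.card_fin] at cs
    have heq : ((∑ i, c i) - N * b) ^ 2 = (N:ℝ)^2 * (b - (∑ i, c i) / N) ^ 2 := by
      field_simp
      ring
    rw [heq] at cs
    nlinarith [sq_nonneg (b - (∑ i, c i) / N)]
  have h2 : (1 / (2 * (N:ℝ))) * ((N:ℝ) * (b - (∑ i, c i) / N) ^ 2)
      ≤ (1 / (2 * (N:ℝ))) * ∑ i, (c i - b) ^ 2 :=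
    mul_le_mul_of_nonneg_left key (by positivity)
  calc (1/2 : ℝ) * (b - (∑ i, c i) / N) ^ 2
      = (1 / (2 * (N:ℝ))) * ((N:ℝ) * (b - (∑ i, c i) / N) ^ 2) := by field_simp
    _ ≤ _ := h2

/-- The LASSO kernel
`K(β₀, β) = exp(−(1/(2N)) ∑ᵢ (yᵢ − β₀ − zᵢᵀβ)² − λ ∑ⱼ |βⱼ|)` is integrable on
`ℝ × ℝ^p` whenever `λ > 0`, regardless of the rank of the design matrix. -/
theorem lasso_kernel_integrable
    (N p : ℕ) (hN : 1 ≤ N)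
    (y : Fin N → ℝ) (z : Fin N → Fin p → ℝ)
    (lam : ℝ) (hlam : 0 < lam) :
    Integrable (fun q : ℝ × (Fin p → ℝ) =>
      Real.exp (-((1 / (2 * (N : ℝ))) *
          ∑ i : Fin N, (y i - q.1 - ∑ j : Fin p, z i j * q.2 j) ^ 2)
        - lam * ∑ j : Fin p, |q.2 j|)) := by
  set f : ℝ × (Fin p → ℝ) → ℝ := fun q =>
      Real.exp (-((1 / (2 * (N : ℝ))) *
          ∑ i : Fin N, (y i - q.1 - ∑ j : Fin p, z i j * q.2 j) ^ 2)
        - lam * ∑ j : Fin p, |q.2 j|) with hf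
  set c : (Fin p → ℝ) → Fin N → ℝ := fun v i => y i - ∑ j, z i j * v j with hc
  set m : (Fin p → ℝ) → ℝ := fun v => (∑ i, c v i) / N with hm
  set S : (Fin p → ℝ) → ℝ := fun v => ∑ j, |v j| with hS
  have hrep : ∀ (b : ℝ) (v : Fin p → ℝ),
      (∑ i, (y i - b - ∑ j, z i j * v j) ^ 2) = ∑ i, (c v i - b) ^ 2 :=
    fun b v => Finset.sum_congr rfl (fun i _ => by rw [sub_right_comm])
  have hcont : Continuous f := by
    apply Real.continuous_exp.comp
    apply Continuous.sub
    · apply Continuous.neg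
      apply continuous_const.mul
      apply continuous_finset_sum
      intro i _
      apply Continuous.pow
      exact (continuous_const.sub continuous_fst).sub
        (continuous_finset_sum _ (fun j _ => continuous_const.mul ((continuous_apply j).comp continuous_snd)))
    · apply continuous_const.mul
      exact continuous_finset_sum _ (fun j _ => ((continuous_apply j).comp continuous_snd).abs)
  have hbound : ∀ (b : ℝ) (v : Fin p → ℝ),
      f (b, v) ≤ Real.exp (-(lam * S v)) * Real.exp (-(1/2 : ℝ) * (b - m v) ^ 2) := by
    intro b v
    rw [← Real.exp_add]
    apply Real.exp_le_exp.mpr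
    have hq := quad_lower_bound hN (c v) b
    simp only [hf, hrep b v]
    have : (∑ i, c v i) / (N:ℝ) = m v := rfl
    rw [this] at hq
    linarith
  have hgauss : ∀ v : Fin p → ℝ,
      Integrable (fun b : ℝ => Real.exp (-(1/2 : ℝ) * (b - m v) ^ 2)) := by
    intro v
    exact (integrable_exp_neg_mul_sq (by norm_num : (0:ℝ) < 1/2)).comp_sub_right (m v)
  have hsec : ∀ v : Fin p → ℝ, Integrable (fun b : ℝ => f (b, v)) := by
    intro v
    apply Integrable.mono ((hgauss v).const_mul (Real.exp (-(lam * S v))))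
      ((hcont.comp (Continuous.prodMk_left v)).aestronglyMeasurable)
    filter_upwards with b
    have h1 : (0:ℝ) < f (b, v) := Real.exp_pos _
    simp only [Function.comp_apply, Real.norm_eq_abs]
    rw [abs_of_pos h1, abs_of_pos (by positivity)]
    exact hbound b v
  rw [show (volume : Measure (ℝ × (Fin p → ℝ))) = (volume : Measure ℝ).prod volume from
    Measure.volume_eq_prod _ _]
  rw [integrable_prod_iff' (hcont.aestronglyMeasurable)]
  constructor
  · exact Filter.Eventually.of_forall hsec
  · set C : ℝ := ∫ x : ℝ, Real.exp (-(1/2 : ℝ) * x ^ 2) with hC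
    have hC0 : 0 ≤ C := integral_nonneg (fun x => (Real.exp_pos _).le)
    have hG : Integrable (fun v : Fin p → ℝ => C * ∏ j, Real.exp (-(lam * |v j|))) := by
      exact (Integrable.fintype_prod (f := fun (_ : Fin p) (t : ℝ) => Real.exp (-(lam * |t|)))
        (fun _ => laplace_integrable hlam)).const_mul C
    apply Integrable.mono hG
    · exact ((hcont.norm.stronglyMeasurable).integral_prod_left').aestronglyMeasurable
    · filter_upwards with v
      have hφ0 : 0 ≤ ∫ b, ‖f (b, v)‖ := integral_nonneg (fun b => norm_nonneg _)
      rw [Real.norm_eq_abs, abs_of_nonneg hφ0, Real.norm_eq_abs,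
        abs_of_nonneg (by positivity)]
      have step1 : (∫ b, ‖f (b, v)‖) ≤
          ∫ b, Real.exp (-(lam * S v)) * Real.exp (-(1/2 : ℝ) * (b - m v) ^ 2) := by
        apply integral_mono (hsec v).norm ((hgauss v).const_mul _)
        intro b
        have h1 : (0:ℝ) < f (b, v) := Real.exp_pos _
        simp only [Real.norm_eq_abs]
        rw [abs_of_pos h1]
        exact hbound b v
      have step2 : (∫ b, Real.exp (-(lam * S v)) * Real.exp (-(1/2 : ℝ) * (b - m v) ^ 2))
          = Real.exp (-(lam * S v)) * C := by
        rw [integral_const_mul, hC,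
          integral_sub_right_eq_self (fun x => Real.exp (-(1/2 : ℝ) * x ^ 2)) (m v)]
      have step3 : Real.exp (-(lam * S v)) = ∏ j, Real.exp (-(lam * |v j|)) := by
        rw [← Real.exp_sum]
        congr 1
        rw [hS]
        rw [Finset.mul_sum, ← Finset.sum_neg_distrib]
      calc (∫ b, ‖f (b, v)‖) ≤ Real.exp (-(lam * S v)) * C := by rw [← step2]; exact step1
        _ = C * ∏ j, Real.exp (-(lam * |v j|)) := by rw [step3]; ring
end
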